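/- For n ≤ 3: every nonzero homogeneous translation invariant symmetric polynomial in F[z₁,…,zₙ] is Haldane, i.e., its squeezing poset B(p) has a maximum element. -/

import Mathlib

open MvPolynomial

/-- A polynomial is translation invariant if substituting `zᵢ ↦ zᵢ + c` fixes it for all `c`. -/
def TransInv {F : Type*} [CommSemiring F] {n : ℕ} (p : MvPolynomial (Fin n) F) : Prop :=
  ∀ c : F, aeval (fun i : Fin n => X i + C c) p = p

/-- One squeeze: decrement an entry `a` and increment an entry `b` with `a > b + 1`. -/
def SqueezeStep (s t : Multiset ℕ) : Prop :=
  ∃ (u : Multiset ℕ) (a b : ℕ), b + 1 < a ∧ s = a ::ₘ b ::ₘ u ∧ t = (a - 1) ::ₘ (b + 1) ::ₘ u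

/-- The (strict) squeezing order: `t` is obtained from `s` by a nonempty sequence of squeezes. -/
def Squeezes (s t : Multiset ℕ) : Prop := Relation.TransGen SqueezeStep s t

/-- The multiset of exponents of a monomial. -/
def expMultiset {n : ℕ} (d : Fin n →₀ ℕ) : Multiset ℕ := Multiset.map d Finset.univ.val

/-- `B p`: the symmetrized monomials (identified with multisets of exponents) occurring
with nonzero coefficient in the symmetric polynomial `p`. -/
def BSet {F : Type*} [CommSemiring F] {n : ℕ} (p : MvPolynomial (Fin n) F) :
    Set (Multiset ℕ) :=
  {m | ∃ d : Fin n →₀ ℕ, expMultiset d = m ∧ coeff d p ≠ 0}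

/-- A symmetric polynomial is Haldane if its squeezing poset has a maximum. -/
def Haldane {F : Type*} [CommSemiring F] {n : ℕ} (p : MvPolynomial (Fin n) F) : Prop :=
  ∃ m ∈ BSet p, ∀ s ∈ BSet p, Relation.ReflTransGen SqueezeStep m s

/-! ### Auxiliary lemmas -/

set_option linter.unusedSectionVars false

section Aux

lemma coeff_pderiv' {R : Type*} [CommSemiring R] {n : ℕ} (i : Fin n) (e : Fin n →₀ ℕ)
    (q : MvPolynomial (Fin n) R) :
    coeff e (pderiv i q) = ((e i + 1 : ℕ) : R) * coeff (e + Finsupp.single i 1) q := by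
  induction q using MvPolynomial.induction_on' with
  | add p q hp hq => simp [hp, hq, mul_add]
  | monomial s a =>
    rw [pderiv_monomial, coeff_monomial, coeff_monomial]
    by_cases h : e + Finsupp.single i 1 = s
    · have hsi : s i = e i + 1 := by
        rw [← h]; simp
      have h2 : s - Finsupp.single i 1 = e := by
        ext j
        rw [Finsupp.tsub_apply, ← h]
        rcases eq_or_ne j i with rfl | hj
        · simp
        · simp [Finsupp.single_eq_of_ne (Ne.symm hj)]
      rw [if_pos h2, if_pos h.symm, hsi]
      push_cast; ring
    · have hne : ¬ (s = e + Finsupp.single i 1) := fun hh => h hh.symm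
      rw [if_neg hne, mul_zero]
      by_cases hsi : s i = 0
      · simp [hsi]
      · have hne2 : ¬ (s - Finsupp.single i 1 = e) := by
          intro he
          apply h
          ext j
          have hj2 := congrArg (fun f => f j) he
          simp only [Finsupp.tsub_apply] at hj2
          rcases eq_or_ne j i with rfl | hj
          · simp only [Finsupp.single_eq_same] at hj2
            simp only [Finsupp.add_apply, Finsupp.single_eq_same]
            omega
          · simp only [Finsupp.single_eq_of_ne hj, Nat.sub_zero] at hj2
            simp [Finsupp.single_eq_of_ne hj, hj2]
        rw [if_neg hne2]

variable {F : Type*} [Field F] [CharZero F] {n : ℕ}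

noncomputable def Phi : MvPolynomial (Fin n) F →ₐ[F] Polynomial (MvPolynomial (Fin n) F) :=
  aeval (fun i => Polynomial.C (X i) + Polynomial.X)

lemma phi_coeff_zero (q : MvPolynomial (Fin n) F) : (Phi q).coeff 0 = q := by
  induction q using MvPolynomial.induction_on with
  | C a => simp [Phi, algebraMap_eq]
  | add p q hp hq => simp [hp, hq]
  | mul_X p i hp =>
    rw [map_mul, show Phi (X i) = Polynomial.C (X i) + Polynomial.X from aeval_X _ i,
      mul_add, Polynomial.coeff_add, Polynomial.coeff_mul_C, Polynomial.coeff_mul_X_zero,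
      hp, add_zero]

lemma phi_coeff_one (q : MvPolynomial (Fin n) F) :
    (Phi q).coeff 1 = ∑ i, pderiv i q := by
  induction q using MvPolynomial.induction_on with
  | C a => simp [Phi, algebraMap_eq]
  | add p q hp hq => simp [hp, hq, Finset.sum_add_distrib]
  | mul_X p i hp =>
    have h0 := phi_coeff_zero p
    rw [map_mul]
    simp only [Phi, aeval_X] at *
    rw [mul_add, Polynomial.coeff_add, Polynomial.coeff_mul_C, Polynomial.coeff_mul_X, hp, h0]
    have : ∀ j : Fin n, pderiv j (p * X i) = pderiv j p * X i + p * pderiv j (X i) :=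
      fun j => pderiv_mul
    rw [Finset.sum_congr rfl (fun j _ => this j), Finset.sum_add_distrib, ← Finset.sum_mul]
    congr 1
    rw [Finset.sum_eq_single i (fun j _ hj => by simp [pderiv_X_of_ne (Ne.symm hj)])
      (fun h => absurd (Finset.mem_univ i) h)]
    simp

lemma phi_eq_C {p : MvPolynomial (Fin n) F} (hti : TransInv p) :
    Phi p = Polynomial.C p := by
  have key : ∀ c : F, Polynomial.eval (C c) (Phi p - Polynomial.C p) = 0 := by
    intro c
    have hcomp :
        ((Polynomial.aeval (C c : MvPolynomial (Fin n) F)).restrictScalars F).comp Phi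
          = aeval (fun i : Fin n => X i + C c) := by
      apply MvPolynomial.algHom_ext
      intro i
      simp [Phi]
    have := congrArg (fun f => f p) hcomp
    simp only [AlgHom.comp_apply, AlgHom.coe_restrictScalars'] at this
    rw [hti c] at this
    rw [← Polynomial.coe_aeval_eq_eval] at *
    simp only [map_sub, this, Polynomial.aeval_C]
    simp
  have hroots : {x : MvPolynomial (Fin n) F | (Phi p - Polynomial.C p).IsRoot x}.Infinite := by
    apply Set.Infinite.mono (s := Set.range (fun c : F => (C c : MvPolynomial (Fin n) F)))
    · rintro x ⟨c, rfl⟩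
      exact key c
    · exact Set.infinite_range_of_injective (C_injective _ _)
  have h2 : Phi p - Polynomial.C p = 0 := Polynomial.eq_zero_of_infinite_isRoot _ hroots
  linear_combination (norm := ring_nf) h2

end Aux

/-! ### Exponent multiset computations -/

noncomputable def f3 (a b c : ℕ) : Fin 3 →₀ ℕ :=
  Finsupp.single 0 a + Finsupp.single 1 b + Finsupp.single 2 c

@[simp] lemma f3_apply0 (a b c : ℕ) : f3 a b c 0 = a := by
  simp [f3, Finsupp.single_apply]

@[simp] lemma f3_apply1 (a b c : ℕ) : f3 a b c 1 = b := by
  simp [f3, Finsupp.single_apply]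

@[simp] lemma f3_apply2 (a b c : ℕ) : f3 a b c 2 = c := by
  simp [f3, Finsupp.single_apply]

lemma eq_f3 (e : Fin 3 →₀ ℕ) : e = f3 (e 0) (e 1) (e 2) := by
  ext j
  fin_cases j <;> simp

lemma f3_add0 (a b c : ℕ) : f3 a b c + Finsupp.single 0 1 = f3 (a + 1) b c := by
  ext j
  fin_cases j <;> simp [Finsupp.single_apply]

lemma f3_add1 (a b c : ℕ) : f3 a b c + Finsupp.single 1 1 = f3 a (b + 1) c := by
  ext j
  fin_cases j <;> simp [Finsupp.single_apply]

lemma f3_add2 (a b c : ℕ) : f3 a b c + Finsupp.single 2 1 = f3 a b (c + 1) := by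
  ext j
  fin_cases j <;> simp [Finsupp.single_apply]

lemma degree_eq_sum {n : ℕ} (e : Fin n →₀ ℕ) : e.degree = ∑ i, e i := by
  rw [Finsupp.degree]
  exact Finset.sum_subset (Finset.subset_univ _)
    (fun i _ hi => Finsupp.notMem_support_iff.mp hi)

lemma sw12 (a b : ℕ) (s : Multiset ℕ) : a ::ₘ b ::ₘ s = b ::ₘ a ::ₘ s := Multiset.cons_swap a b s

lemma sw23 (a b c : ℕ) (s : Multiset ℕ) : a ::ₘ b ::ₘ c ::ₘ s = a ::ₘ c ::ₘ b ::ₘ s :=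
  congrArg _ (Multiset.cons_swap b c s)

lemma expM0 (e : Fin 0 →₀ ℕ) : expMultiset e = 0 := by
  have : (Finset.univ.val : Multiset (Fin 0)) = 0 := by decide
  simp [expMultiset, this]

lemma expM1 (e : Fin 1 →₀ ℕ) : expMultiset e = e 0 ::ₘ 0 := by
  have : (Finset.univ.val : Multiset (Fin 1)) = 0 ::ₘ 0 := by decide
  simp [expMultiset, this]

lemma expM2 (e : Fin 2 →₀ ℕ) : expMultiset e = e 0 ::ₘ e 1 ::ₘ 0 := by
  have : (Finset.univ.val : Multiset (Fin 2)) = (0 : Fin 2) ::ₘ (1 : Fin 2) ::ₘ 0 := by decide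
  simp [expMultiset, this]

lemma expM3 (e : Fin 3 →₀ ℕ) : expMultiset e = e 0 ::ₘ e 1 ::ₘ e 2 ::ₘ 0 := by
  have : (Finset.univ.val : Multiset (Fin 3))
      = (0 : Fin 3) ::ₘ (1 : Fin 3) ::ₘ (2 : Fin 3) ::ₘ 0 := by decide
  simp [expMultiset, this]

lemma sort3 (u v w : ℕ) : ∃ x y z : ℕ, y ≤ x ∧ z ≤ y ∧ x + y + z = u + v + w ∧
    x ≤ max u (max v w) ∧ (u ::ₘ v ::ₘ w ::ₘ 0 : Multiset ℕ) = x ::ₘ y ::ₘ z ::ₘ 0 := by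
  rcases le_total v u with h1 | h1
  · rcases le_total w v with h2 | h2
    · exact ⟨u, v, w, h1, h2, by omega, by omega, rfl⟩
    · rcases le_total w u with h3 | h3
      · exact ⟨u, w, v, h3, h2, by omega, by omega, sw23 u v w 0⟩
      · exact ⟨w, u, v, h3, h1, by omega, by omega, by rw [sw23 u v w, sw12 u w]⟩
  · rcases le_total w u with h2 | h2
    · exact ⟨v, u, w, h1, h2, by omega, by omega, sw12 u v _⟩
    · rcases le_total w v with h3 | h3
      · exact ⟨v, w, u, h3, h2, by omega, by omega, by rw [sw12 u v, sw23 v u w]⟩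
      · exact ⟨w, v, u, h3, h1, by omega, by omega, by
          rw [sw12 u v, sw23 v u w, sw12 v w]⟩

/-! ### Squeezing chains -/

lemma chain2 : ∀ (k a b x y : ℕ), a - x ≤ k → b ≤ a → y ≤ x → a + b = x + y → x ≤ a →
    Relation.ReflTransGen SqueezeStep (a ::ₘ b ::ₘ 0) (x ::ₘ y ::ₘ 0) := by
  intro k
  induction k with
  | zero =>
    intro a b x y hm hab hxy hs h1
    have hax : a = x := by omega
    have hby : b = y := by omega
    rw [hax, hby]
  | succ k ih =>
    intro a b x y hm hab hxy hs h1
    rcases eq_or_lt_of_le h1 with rfl | hlt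
    · have : b = y := by omega
      rw [this]
    · refine Relation.ReflTransGen.head ⟨0, a, b, by omega, rfl, rfl⟩ ?_
      exact ih (a - 1) (b + 1) x y (by omega) (by omega) hxy (by omega) (by omega)

lemma chain3 : ∀ (k a b c x y z : ℕ), (a - x) + ((a + b) - (x + y)) ≤ k →
    b ≤ a → c ≤ b → y ≤ x → z ≤ y → a + b + c = x + y + z → x ≤ a → x + y ≤ a + b →
    Relation.ReflTransGen SqueezeStep (a ::ₘ b ::ₘ c ::ₘ 0) (x ::ₘ y ::ₘ z ::ₘ 0) := by
  intro k
  induction k with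
  | zero =>
    intro a b c x y z hm hab hbc hxy hyz hs h1 h2
    have : a = x ∧ b = y ∧ c = z := by omega
    rw [this.1, this.2.1, this.2.2]
  | succ k ih =>
    intro a b c x y z hm hab hbc hxy hyz hs h1 h2
    by_cases hax : a = x
    · by_cases hby : b = y
      · have : c = z := by omega
        rw [hax, hby, this]
      · have hby' : y < b := by omega
        refine Relation.ReflTransGen.head (b := (b - 1) ::ₘ (c + 1) ::ₘ a ::ₘ 0)
          ⟨a ::ₘ 0, b, c, by omega, by rw [sw12 a b, sw23 b a c], rfl⟩ ?_
        rw [show (b - 1) ::ₘ (c + 1) ::ₘ a ::ₘ 0 = a ::ₘ (b - 1) ::ₘ (c + 1) ::ₘ 0 by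
          rw [sw23 (b-1) (c+1) a, sw12 (b-1) a]]
        exact ih a (b - 1) (c + 1) x y z (by omega) (by omega) (by omega) hxy hyz
          (by omega) h1 (by omega)
    · have hax' : x < a := by omega
      by_cases hpair : x + y = a + b
      · refine Relation.ReflTransGen.head ⟨c ::ₘ 0, a, b, by omega, rfl, rfl⟩ ?_
        exact ih (a - 1) (b + 1) c x y z (by omega) (by omega) (by omega) hxy hyz
          (by omega) (by omega) (by omega)
      · have hpair' : x + y < a + b := by omega
        by_cases hcb : c < b
        · by_cases hba : b ≤ a - 1
          · refine Relation.ReflTransGen.head (b := (a - 1) ::ₘ (c + 1) ::ₘ b ::ₘ 0)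
              ⟨b ::ₘ 0, a, c, by omega, by rw [sw23 a b c], rfl⟩ ?_
            rw [sw23 (a-1) (c+1) b]
            exact ih (a - 1) b (c + 1) x y z (by omega) (by omega) (by omega) hxy hyz
              (by omega) (by omega) (by omega)
          · refine Relation.ReflTransGen.head (b := (b - 1) ::ₘ (c + 1) ::ₘ a ::ₘ 0)
              ⟨a ::ₘ 0, b, c, by omega, by rw [sw12 a b, sw23 b a c], rfl⟩ ?_
            rw [show (b - 1) ::ₘ (c + 1) ::ₘ a ::ₘ 0 = a ::ₘ (b - 1) ::ₘ (c + 1) ::ₘ 0 by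
              rw [sw23 (b-1) (c+1) a, sw12 (b-1) a]]
            exact ih a (b - 1) (c + 1) x y z (by omega) (by omega) (by omega) hxy hyz
              (by omega) (by omega) (by omega)
        · have hcb' : c = b := by omega
          refine Relation.ReflTransGen.head (b := (a - 1) ::ₘ (c + 1) ::ₘ b ::ₘ 0)
            ⟨b ::ₘ 0, a, c, by omega, by rw [sw23 a b c], rfl⟩ ?_
          exact ih (a - 1) (c + 1) b x y z (by omega) (by omega) (by omega) hxy hyz
            (by omega) (by omega) (by omega)

theorem stmt_7 (F : Type*) [Field F] [CharZero F] (n : ℕ) (hn : n ≤ 3)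
    (p : MvPolynomial (Fin n) F) (hp : p ≠ 0) (hsym : p.IsSymmetric) (hti : TransInv p)
    (d : ℕ) (hhom : p.IsHomogeneous d) : Haldane p := by
  have hdeg : ∀ e : Fin n →₀ ℕ, coeff e p ≠ 0 → e.degree = d :=
    fun e he => Classical.byContradiction fun h => he (hhom.coeff_eq_zero h)
  interval_cases n
  · -- n = 0
    obtain ⟨e0, he0⟩ := ne_zero_iff.mp hp
    refine ⟨expMultiset e0, ⟨e0, rfl, he0⟩, ?_⟩
    rintro s ⟨e, rfl, he⟩
    have he' : e = e0 := by ext j; exact j.elim0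
    rw [he']
  · -- n = 1
    obtain ⟨e0, he0⟩ := ne_zero_iff.mp hp
    refine ⟨expMultiset e0, ⟨e0, rfl, he0⟩, ?_⟩
    rintro s ⟨e, rfl, he⟩
    have h1 : e 0 = e0 0 := by
      have g1 := hdeg e he
      have g2 := hdeg e0 he0
      rw [degree_eq_sum, Fin.sum_univ_one] at g1 g2
      omega
    rw [expM1, expM1, h1]
  · -- n = 2
    have hne : p.support.Nonempty := support_nonempty.mpr hp
    obtain ⟨estar, hestar, hms⟩ :=
      Finset.exists_mem_eq_sup p.support hne (fun e : Fin 2 →₀ ℕ => e 0)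
    set m := p.support.sup (fun e : Fin 2 →₀ ℕ => e 0) with hmdef
    have hestar' : coeff estar p ≠ 0 := mem_support_iff.mp hestar
    have hd2 : ∀ e : Fin 2 →₀ ℕ, coeff e p ≠ 0 → e 0 + e 1 = d := by
      intro e he
      have g := hdeg e he
      rw [degree_eq_sum, Fin.sum_univ_two] at g
      omega
    have hb : ∀ e : Fin 2 →₀ ℕ, coeff e p ≠ 0 → ∀ i : Fin 2, e i ≤ m := by
      intro e he i
      set σ := Equiv.swap (0 : Fin 2) i with hσ
      have h1 : coeff (Finsupp.mapDomain σ e) p ≠ 0 := by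
        have hc := coeff_rename_mapDomain (⇑σ) (Equiv.injective σ) p e
        rw [hsym σ] at hc
        rw [hc]; exact he
      have h3 : (Finsupp.mapDomain (⇑σ) e) 0 ≤ m :=
        Finset.le_sup (f := fun e : Fin 2 →₀ ℕ => e 0) (mem_support_iff.mpr h1)
      have h4 : (Finsupp.mapDomain (⇑σ) e) (σ i) = e i :=
        Finsupp.mapDomain_apply (Equiv.injective σ) e i
      rw [hσ, Equiv.swap_apply_right] at h4
      rw [← h4]
      exact h3
    have hes0 : estar 0 = m := hms.symm
    have hd_es : estar 0 + estar 1 = d := hd2 _ hestar'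
    have hes1 : estar 1 ≤ m := hb _ hestar' 1
    refine ⟨expMultiset estar, ⟨estar, rfl, hestar'⟩, ?_⟩
    rintro s ⟨e, rfl, he⟩
    have hx0 : e 0 ≤ m := hb _ he 0
    have hx1 : e 1 ≤ m := hb _ he 1
    have hx : e 0 + e 1 = d := hd2 e he
    rw [expM2, expM2, hes0, show estar 1 = d - m by omega]
    rcases le_total (e 1) (e 0) with hcmp | hcmp
    · exact chain2 d m (d - m) (e 0) (e 1) (by omega) (by omega) hcmp (by omega) hx0
    · rw [sw12 (e 0) (e 1)]
      exact chain2 d m (d - m) (e 1) (e 0) (by omega) (by omega) hcmp (by omega) hx1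
  · -- n = 3
    have hne : p.support.Nonempty := support_nonempty.mpr hp
    obtain ⟨estar, hestar, hms⟩ :=
      Finset.exists_mem_eq_sup p.support hne (fun e : Fin 3 →₀ ℕ => e 0)
    set m := p.support.sup (fun e : Fin 3 →₀ ℕ => e 0) with hmdef
    have hestar' : coeff estar p ≠ 0 := mem_support_iff.mp hestar
    have hd3 : ∀ e : Fin 3 →₀ ℕ, coeff e p ≠ 0 → e 0 + e 1 + e 2 = d := by
      intro e he
      have g := hdeg e he
      rw [degree_eq_sum, Fin.sum_univ_three] at g
      omega
    have hb : ∀ e : Fin 3 →₀ ℕ, coeff e p ≠ 0 → ∀ i : Fin 3, e i ≤ m := by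
      intro e he i
      set σ := Equiv.swap (0 : Fin 3) i with hσ
      have h1 : coeff (Finsupp.mapDomain σ e) p ≠ 0 := by
        have hc := coeff_rename_mapDomain (⇑σ) (Equiv.injective σ) p e
        rw [hsym σ] at hc
        rw [hc]; exact he
      have h3 : (Finsupp.mapDomain (⇑σ) e) 0 ≤ m :=
        Finset.le_sup (f := fun e : Fin 3 →₀ ℕ => e 0) (mem_support_iff.mpr h1)
      have h4 : (Finsupp.mapDomain (⇑σ) e) (σ i) = e i :=
        Finsupp.mapDomain_apply (Equiv.injective σ) e i
      rw [hσ, Equiv.swap_apply_right] at h4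
      rw [← h4]
      exact h3
    have hzero : ∀ j k : ℕ, coeff (f3 (m + 1) j k) p = 0 := by
      intro j k
      by_contra h
      have := hb _ h 0
      simp only [f3_apply0] at this
      omega
    have hD : (∑ i : Fin 3, pderiv i p) = 0 := by
      have h1 := phi_coeff_one p
      rw [phi_eq_C hti] at h1
      rw [← h1]
      simp [Polynomial.coeff_C]
    have rel : ∀ e : Fin 3 →₀ ℕ,
        ((e 0 + 1 : ℕ) : F) * coeff (e + Finsupp.single 0 1) p
        + ((e 1 + 1 : ℕ) : F) * coeff (e + Finsupp.single 1 1) p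
        + ((e 2 + 1 : ℕ) : F) * coeff (e + Finsupp.single 2 1) p = 0 := by
      intro e
      have h0 := congrArg (coeff e) hD
      rw [coeff_sum, Fin.sum_univ_three, coeff_pderiv', coeff_pderiv', coeff_pderiv'] at h0
      simpa using h0
    have push : ∀ (k j : ℕ), coeff (f3 m j k) p ≠ 0 → coeff (f3 m (j + k) 0) p ≠ 0 := by
      intro k
      induction k with
      | zero => intro j h; simpa using h
      | succ k ihk =>
        intro j h
        have hr := rel (f3 m j k)
        rw [f3_add0, f3_add1, f3_add2] at hr
        simp only [f3_apply0, f3_apply1, f3_apply2] at hr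
        rw [hzero j k, mul_zero, zero_add] at hr
        have h1 : coeff (f3 m (j + 1) k) p ≠ 0 := by
          intro h0
          rw [h0, mul_zero, zero_add] at hr
          rcases mul_eq_zero.mp hr with hc | hc
          · exact (Nat.cast_ne_zero.mpr (Nat.succ_ne_zero k)) hc
          · exact h hc
        have h2 := ihk (j + 1) h1
        rw [show j + 1 + k = j + (k + 1) by omega] at h2
        exact h2
    have hes_eq : estar = f3 m (estar 1) (estar 2) := by
      rw [show m = estar 0 from hms]
      exact eq_f3 estar
    have hd_es : estar 0 + estar 1 + estar 2 = d := hd3 _ hestar'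
    have hes0 : estar 0 = m := hms.symm
    have htop : coeff (f3 m (d - m) 0) p ≠ 0 := by
      have h := push (estar 2) (estar 1) (by rw [← hes_eq]; exact hestar')
      have heq : estar 1 + estar 2 = d - m := by omega
      rwa [heq] at h
    have hd_m : d - m ≤ m := by
      have := hb _ htop 1
      simpa using this
    have hm_d : m ≤ d := by omega
    refine ⟨expMultiset (f3 m (d - m) 0), ⟨_, rfl, htop⟩, ?_⟩
    rintro s ⟨e, rfl, he⟩
    rw [expM3, expM3]
    simp only [f3_apply0, f3_apply1, f3_apply2]
    have hx : e 0 + e 1 + e 2 = d := hd3 e he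
    have hb0 : e 0 ≤ m := hb _ he 0
    have hb1 : e 1 ≤ m := hb _ he 1
    have hb2 : e 2 ≤ m := hb _ he 2
    obtain ⟨x, y, z, hyx, hzy, hs, hxmax, hperm⟩ := sort3 (e 0) (e 1) (e 2)
    rw [hperm]
    exact chain3 (m + d) m (d - m) 0 x y z (by omega) (by omega) (by omega) hyx hzy
      (by omega) (by omega) (by omega)
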